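/- arXiv:1804.06906 — 5 statements merged into one kernel-verified Lean document; each statement's English description precedes it below -/
import Mathlib

section
/- For any positive integer n, 1/(12n+1) < log(n!) − (1/2)log(2πn) − n log n + n < 1/(12n). -/
open Real Nat Filter

set_option maxHeartbeats 1000000

private lemma robbins_diff_lt (m : ℕ) :
    Real.log (Stirling.stirlingSeq (m + 1)) - Real.log (Stirling.stirlingSeq (m + 2)) <
      1 / (12 * ((m : ℝ) + 1)) - 1 / (12 * ((m : ℝ) + 2)) := by
  have hm : (0 : ℝ) ≤ m := Nat.cast_nonneg m
  have hx0 : (0:ℝ) < ((1 : ℝ) / (2 * (↑(m + 1) : ℝ) + 1)) ^ 2 := by positivity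
  have hx1 : ((1 : ℝ) / (2 * (↑(m + 1) : ℝ) + 1)) ^ 2 < 1 := by
    have h1 : (1 : ℝ) < 2 * (↑(m + 1) : ℝ) + 1 := by push_cast; linarith
    have h2 : (0:ℝ) < 2 * (↑(m + 1) : ℝ) + 1 := by linarith
    have h3 : (1 : ℝ) / (2 * (↑(m + 1) : ℝ) + 1) < 1 := by
      rw [div_lt_one h2]; exact h1
    nlinarith [div_pos one_pos h2]
  have hf := Stirling.log_stirlingSeq_diff_hasSum m
  have hg := (hasSum_geometric_of_lt_one hx0.le hx1).mul_left
    (((1 : ℝ) / (2 * (↑(m + 1) : ℝ) + 1)) ^ 2 / 3)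
  have hle : ∀ k : ℕ, (1 : ℝ) / (2 * (↑(k + 1) : ℝ) + 1) *
      (((1 : ℝ) / (2 * (↑(m + 1) : ℝ) + 1)) ^ 2) ^ (k + 1) ≤
      ((1 : ℝ) / (2 * (↑(m + 1) : ℝ) + 1)) ^ 2 / 3 *
      ((((1 : ℝ) / (2 * (↑(m + 1) : ℝ) + 1)) ^ 2) ^ k) := by
    intro k
    have h1 : (1 : ℝ) / (2 * (↑(k + 1) : ℝ) + 1) ≤ 1 / 3 := by
      apply one_div_le_one_div_of_le (by norm_num)
      push_cast; linarith [Nat.cast_nonneg (α := ℝ) k]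
    have h2 : (0 : ℝ) ≤ (((1 : ℝ) / (2 * (↑(m + 1) : ℝ) + 1)) ^ 2) ^ (k + 1) :=
      pow_nonneg hx0.le _
    calc (1 : ℝ) / (2 * (↑(k + 1) : ℝ) + 1) *
        (((1 : ℝ) / (2 * (↑(m + 1) : ℝ) + 1)) ^ 2) ^ (k + 1)
        ≤ 1 / 3 * (((1 : ℝ) / (2 * (↑(m + 1) : ℝ) + 1)) ^ 2) ^ (k + 1) :=
          mul_le_mul_of_nonneg_right h1 h2
      _ = ((1 : ℝ) / (2 * (↑(m + 1) : ℝ) + 1)) ^ 2 / 3 *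
          ((((1 : ℝ) / (2 * (↑(m + 1) : ℝ) + 1)) ^ 2) ^ k) := by ring
  have hstrict : (1 : ℝ) / (2 * (↑(1 + 1 : ℕ) : ℝ) + 1) *
      (((1 : ℝ) / (2 * (↑(m + 1) : ℝ) + 1)) ^ 2) ^ (1 + 1) <
      ((1 : ℝ) / (2 * (↑(m + 1) : ℝ) + 1)) ^ 2 / 3 *
      ((((1 : ℝ) / (2 * (↑(m + 1) : ℝ) + 1)) ^ 2) ^ 1) := by
    have h5 : ((1 : ℝ) / (2 * (↑(1 + 1 : ℕ) : ℝ) + 1)) = 1 / 5 := by norm_num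
    rw [h5]
    have h2 : (0 : ℝ) < (((1 : ℝ) / (2 * (↑(m + 1) : ℝ) + 1)) ^ 2) ^ 2 := pow_pos hx0 2
    nlinarith [h2]
  have hlt := hasSum_lt hle hstrict hf hg
  refine hlt.trans_le (le_of_eq ?_)
  have h3 : (2 * ((m : ℝ) + 1) + 1) ≠ 0 := by positivity
  have h4 : 1 - ((1 : ℝ) / (2 * ((m : ℝ) + 1) + 1)) ^ 2 ≠ 0 := by
    push_cast at hx1
    linarith
  have h5 : (12 : ℝ) * ((m : ℝ) + 1) ≠ 0 := by positivity
  have h6 : (12 : ℝ) * ((m : ℝ) + 2) ≠ 0 := by positivity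
  push_cast
  have h9 : (4 * ((m:ℝ)+1)^2 + 4 * ((m:ℝ)+1)) ≠ 0 := by positivity
  have e0 : (1 - ((1:ℝ)/(2*((m:ℝ)+1)+1))^2) =
      (4*((m:ℝ)+1)^2 + 4*((m:ℝ)+1))/(2*((m:ℝ)+1)+1)^2 := by
    field_simp
    ring
  rw [e0, inv_div]
  field_simp
  ring

private lemma robbins_diff_gt (m : ℕ) :
    1 / (12 * ((m : ℝ) + 1) + 1) - 1 / (12 * ((m : ℝ) + 2) + 1) <
      Real.log (Stirling.stirlingSeq (m + 1)) - Real.log (Stirling.stirlingSeq (m + 2)) := by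
  have hm : (0 : ℝ) ≤ m := Nat.cast_nonneg m
  set x : ℝ := ((1 : ℝ) / (2 * ((m : ℕ) + 1 : ℕ) + 1)) ^ 2 with hx
  have hxe : x = ((1 : ℝ) / (2 * ((m : ℝ) + 1) + 1)) ^ 2 := by rw [hx]; push_cast; ring
  have hx0 : 0 < x := by rw [hxe]; positivity
  have hf := Stirling.log_stirlingSeq_diff_hasSum m
  have h2 : ∑ k ∈ Finset.range 2,
      ((1 : ℝ) / (2 * ↑(k + 1) + 1) * ((1 / (2 * ↑(m + 1) + 1)) ^ 2) ^ (k + 1)) ≤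
      Real.log (Stirling.stirlingSeq (m + 1)) - Real.log (Stirling.stirlingSeq (m + 2)) := by
    refine sum_le_hasSum _ (fun k _ => ?_) hf
    positivity
  have hsum : ∑ k ∈ Finset.range 2,
      ((1 : ℝ) / (2 * ↑(k + 1) + 1) * ((1 / (2 * ↑(m + 1) + 1)) ^ 2) ^ (k + 1)) =
      1 / 3 * x + 1 / 5 * x ^ 2 := by
    rw [Finset.sum_range_succ, Finset.sum_range_one]
    norm_num [hx]
  rw [hsum] at h2
  refine lt_of_lt_of_le ?_ h2
  rw [hxe]
  have e1 : 1 / (12 * ((m : ℝ) + 1) + 1) - 1 / (12 * ((m : ℝ) + 2) + 1) =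
      12 / ((12 * (m : ℝ) + 13) * (12 * (m : ℝ) + 25)) := by
    have : (12 : ℝ) * ((m : ℝ) + 1) + 1 = 12 * (m : ℝ) + 13 := by ring
    have : (12 : ℝ) * ((m : ℝ) + 2) + 1 = 12 * (m : ℝ) + 25 := by ring
    field_simp
    ring
  have e2 : 1 / 3 * ((1 : ℝ) / (2 * ((m : ℝ) + 1) + 1)) ^ 2 +
      1 / 5 * (((1 : ℝ) / (2 * ((m : ℝ) + 1) + 1)) ^ 2) ^ 2 =
      (5 * (2 * (m : ℝ) + 3) ^ 2 + 3) / (15 * (2 * (m : ℝ) + 3) ^ 4) := by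
    have h3 : (2 * ((m : ℝ) + 1) + 1) ≠ 0 := by positivity
    field_simp
    ring
  rw [e1, e2, div_lt_div_iff₀ (by positivity) (by positivity)]
  nlinarith [sq_nonneg ((m : ℝ)), pow_nonneg hm 3, pow_nonneg hm 2, sq_nonneg ((m:ℝ)+1)]

private lemma robbins_tendsto :
    Tendsto (fun n : ℕ => Real.log (Stirling.stirlingSeq (n + 1))) atTop
      (nhds ((1 / 2) * Real.log π)) := by
  have h1 : Tendsto (fun n : ℕ => Stirling.stirlingSeq (n + 1)) atTop (nhds (Real.sqrt π)) :=
    Stirling.tendsto_stirlingSeq_sqrt_pi.comp (tendsto_add_atTop_nat 1)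
  have h2 : Real.log (Real.sqrt π) = (1 / 2) * Real.log π := by
    rw [Real.log_sqrt Real.pi_pos.le]; ring
  rw [← h2]
  exact (Real.continuousAt_log (by positivity)).tendsto.comp h1

private lemma robbins_upper (n : ℕ) :
    Real.log (Stirling.stirlingSeq (n + 1)) - 1 / (12 * ((n : ℝ) + 1)) < (1 / 2) * Real.log π := by
  have hb : StrictMono (fun n : ℕ => Real.log (Stirling.stirlingSeq (n + 1)) - 1 / (12 * ((n : ℝ) + 1))) := by
    apply strictMono_nat_of_lt_succ
    intro m
    have := robbins_diff_lt m
    push_cast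
    have hne : ((m : ℝ) + 1 + 1) = ((m : ℝ) + 2) := by ring
    rw [hne]
    linarith
  have htend : Tendsto (fun n : ℕ => Real.log (Stirling.stirlingSeq (n + 1)) - 1 / (12 * ((n : ℝ) + 1)))
      atTop (nhds ((1 / 2) * Real.log π)) := by
    have hA : Tendsto (fun n : ℕ => 12 * ((n : ℝ) + 1)) atTop atTop :=
      (tendsto_atTop_add_const_right atTop 1 tendsto_natCast_atTop_atTop).const_mul_atTop
        (by norm_num)
    have h0 : Tendsto (fun n : ℕ => 1 / (12 * ((n : ℝ) + 1))) atTop (nhds 0) := by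
      exact hA.inv_tendsto_atTop.congr (fun n => by simp [one_div])
    simpa using robbins_tendsto.sub h0
  have hle := hb.monotone.ge_of_tendsto htend (n + 1)
  calc Real.log (Stirling.stirlingSeq (n + 1)) - 1 / (12 * ((n : ℝ) + 1)) <
      Real.log (Stirling.stirlingSeq (n + 1 + 1)) - 1 / (12 * ((n + 1 : ℕ) + 1 : ℝ)) := hb (by omega)
    _ ≤ (1 / 2) * Real.log π := hle

private lemma robbins_lower (n : ℕ) :
    (1 / 2) * Real.log π < Real.log (Stirling.stirlingSeq (n + 1)) - 1 / (12 * ((n : ℝ) + 1) + 1) := by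
  have hc : StrictAnti (fun n : ℕ =>
      Real.log (Stirling.stirlingSeq (n + 1)) - 1 / (12 * ((n : ℝ) + 1) + 1)) := by
    apply strictAnti_nat_of_succ_lt
    intro m
    have := robbins_diff_gt m
    push_cast
    have hne : ((m : ℝ) + 1 + 1) = ((m : ℝ) + 2) := by ring
    rw [hne]
    linarith
  have htend : Tendsto (fun n : ℕ =>
      Real.log (Stirling.stirlingSeq (n + 1)) - 1 / (12 * ((n : ℝ) + 1) + 1))
      atTop (nhds ((1 / 2) * Real.log π)) := by
    have hA : Tendsto (fun n : ℕ => 12 * ((n : ℝ) + 1) + 1) atTop atTop :=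
      tendsto_atTop_add_const_right atTop 1
        ((tendsto_atTop_add_const_right atTop 1 tendsto_natCast_atTop_atTop).const_mul_atTop
          (by norm_num))
    have h0 : Tendsto (fun n : ℕ => 1 / (12 * ((n : ℝ) + 1) + 1)) atTop (nhds 0) := by
      exact hA.inv_tendsto_atTop.congr (fun n => by simp [one_div])
    simpa using robbins_tendsto.sub h0
  have hge := hc.antitone.le_of_tendsto htend (n + 1)
  calc (1 / 2) * Real.log π ≤
      Real.log (Stirling.stirlingSeq (n + 1 + 1)) - 1 / (12 * ((n + 1 : ℕ) + 1 : ℝ) + 1) := hge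
    _ < Real.log (Stirling.stirlingSeq (n + 1)) - 1 / (12 * ((n : ℝ) + 1) + 1) := hc (by omega)

/-- Robbins' form of Stirling's approximation. -/
theorem stmt_7 (n : ℕ) (hn : 0 < n) :
    1 / (12 * (n : ℝ) + 1) <
        Real.log (n !) - (1 / 2) * Real.log (2 * Real.pi * n) - n * Real.log n + n ∧
      Real.log (n !) - (1 / 2) * Real.log (2 * Real.pi * n) - n * Real.log n + n <
        1 / (12 * (n : ℝ)) := by
  obtain ⟨m, rfl⟩ : ∃ m, n = m + 1 := ⟨n - 1, (Nat.succ_pred_eq_of_pos hn).symm⟩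
  have hn' : (0 : ℝ) < ((m : ℝ) + 1) := by positivity
  have key : Real.log ((m + 1)!) - (1 / 2) * Real.log (2 * Real.pi * (m + 1 : ℕ)) -
      ((m + 1 : ℕ) : ℝ) * Real.log ((m + 1 : ℕ)) + ((m + 1 : ℕ) : ℝ) =
      Real.log (Stirling.stirlingSeq (m + 1)) - (1 / 2) * Real.log π := by
    rw [Stirling.log_stirlingSeq_formula]
    have h1 : Real.log (((m + 1 : ℕ) : ℝ) / Real.exp 1) =
        Real.log ((m + 1 : ℕ)) - 1 := by
      rw [Real.log_div (by push_cast; positivity) (Real.exp_ne_zero 1), Real.log_exp]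
    have h2 : Real.log (2 * Real.pi * ((m + 1 : ℕ) : ℝ)) =
        Real.log 2 + Real.log π + Real.log ((m + 1 : ℕ)) := by
      rw [Real.log_mul (by positivity) (by push_cast; positivity),
        Real.log_mul (by norm_num) Real.pi_ne_zero]
    have h3 : Real.log (2 * ((m + 1 : ℕ) : ℝ)) = Real.log 2 + Real.log ((m + 1 : ℕ)) := by
      rw [Real.log_mul (by norm_num) (by push_cast; positivity)]
    rw [h1, h2, h3]
    ring
  push_cast at key ⊢
  rw [key]
  constructor
  · have := robbins_lower m
    linarith [this]
  · have := robbins_upper m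
    linarith [this]
end

section
/- Let n_1,...,n_{k+1} be nonnegative integers summing to n with max_i n_i < n. Then (n!/n^n) ∏_{j : n_j > 0} n_j^{n_j}/n_j! ≤ (n^{1/2}/(2π)^{1/2}) ∏_{j : n_j>0} n_j^{-1/2} < n^{1/2}. -/
open Finset Nat

noncomputable def stf (a : ℕ) : ℝ := (a ! : ℝ) / (Real.sqrt a * ((a : ℝ) / Real.exp 1) ^ a)

lemma stf_eq (a : ℕ) : stf a = Real.sqrt 2 * Stirling.stirlingSeq a := by
  rcases Nat.eq_zero_or_pos a with rfl | ha
  · simp [stf]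
  · have h1 : (0:ℝ) < a := by exact_mod_cast ha
    rw [stf, Stirling.stirlingSeq, show ((2:ℝ) * a) = 2 * (a:ℝ) from rfl,
      Real.sqrt_mul (by norm_num)]
    have h2 : Real.sqrt 2 ≠ 0 := by positivity
    have h3 : Real.sqrt (a:ℝ) ≠ 0 := by positivity
    have h4 : ((a:ℝ) / Real.exp 1) ^ a ≠ 0 := by positivity
    field_simp

lemma sqrt_pi_le_stirlingSeq (a : ℕ) (ha : 1 ≤ a) :
    Real.sqrt Real.pi ≤ Stirling.stirlingSeq a := by
  refine le_of_tendsto Stirling.tendsto_stirlingSeq_sqrt_pi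
    (Filter.eventually_atTop.mpr ⟨a, fun m hm => ?_⟩)
  obtain ⟨b, rfl⟩ : ∃ b, a = b + 1 := ⟨a - 1, by omega⟩
  obtain ⟨c, rfl⟩ : ∃ c, m = c + 1 := ⟨m - 1, by omega⟩
  exact Stirling.stirlingSeq'_antitone (by omega : b ≤ c)

lemma stf_ge (a : ℕ) (ha : 1 ≤ a) : Real.sqrt (2 * Real.pi) ≤ stf a := by
  rw [stf_eq, Real.sqrt_mul (by norm_num)]
  exact mul_le_mul_of_nonneg_left (sqrt_pi_le_stirlingSeq a ha) (Real.sqrt_nonneg 2)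

lemma stf_anti {a b : ℕ} (ha : 1 ≤ a) (hab : a ≤ b) : stf b ≤ stf a := by
  rw [stf_eq, stf_eq]
  refine mul_le_mul_of_nonneg_left ?_ (Real.sqrt_nonneg 2)
  obtain ⟨a', rfl⟩ : ∃ a', a = a' + 1 := ⟨a - 1, by omega⟩
  obtain ⟨b', rfl⟩ : ∃ b', b = b' + 1 := ⟨b - 1, by omega⟩
  exact Stirling.stirlingSeq'_antitone (by omega : a' ≤ b')

lemma stf_pos (a : ℕ) (ha : 1 ≤ a) : 0 < stf a := by
  have h1 : (0:ℝ) < a := by exact_mod_cast ha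
  rw [stf]; positivity

lemma factorial_eq_stf (a : ℕ) (ha : 1 ≤ a) :
    (a ! : ℝ) = stf a * Real.sqrt a * ((a : ℝ) / Real.exp 1) ^ a := by
  have h1 : (0:ℝ) < a := by exact_mod_cast ha
  rw [stf]
  field_simp

/-- If `t 1, …, t (k+1)` are nonnegative integers summing to `n` with each `t j < n`, then
`(n!/n^n) ∏_{j : t j > 0} (t j)^{t j}/(t j)! ≤ (√n/√(2π)) ∏_{j : t j > 0} (t j)^{-1/2} < √n`. -/
theorem stmt_8 (k n : ℕ) (t : Fin (k + 1) → ℕ)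
    (hsum : ∑ j, t j = n) (hmax : ∀ j, t j < n) :
    ((n ! : ℝ) / n ^ n) * ∏ j ∈ Finset.univ.filter (fun j => 0 < t j),
        ((t j : ℝ) ^ t j / (t j)!) ≤
      (Real.sqrt n / Real.sqrt (2 * Real.pi)) *
        ∏ j ∈ Finset.univ.filter (fun j => 0 < t j), (1 / Real.sqrt (t j)) ∧
    (Real.sqrt n / Real.sqrt (2 * Real.pi)) *
        ∏ j ∈ Finset.univ.filter (fun j => 0 < t j), (1 / Real.sqrt (t j)) <
      Real.sqrt n := by
  classical
  have hn : 0 < n := lt_of_le_of_lt (Nat.zero_le _) (hmax 0)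
  have hn' : (0:ℝ) < n := by exact_mod_cast hn
  set S := Finset.univ.filter (fun j => 0 < t j) with hS
  have hmem : ∀ j ∈ S, 1 ≤ t j := fun j hj => (Finset.mem_filter.mp hj).2
  have hle : ∀ j ∈ S, t j ≤ n := fun j _ => (hmax j).le
  have hSsum : ∑ j ∈ S, t j = n := by
    rw [← hsum]
    exact Finset.sum_filter_of_ne (fun x _ hx => Nat.pos_of_ne_zero hx)
  have hSne : S.Nonempty := by
    rcases Finset.eq_empty_or_nonempty S with h | h
    · rw [h, Finset.sum_empty] at hSsum; omega
    · exact h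
  obtain ⟨j₀, hj₀⟩ := hSne
  have herase : (S.erase j₀).Nonempty := by
    by_contra h
    rw [Finset.not_nonempty_iff_eq_empty] at h
    have h2 := Finset.add_sum_erase S t hj₀
    rw [h, Finset.sum_empty, add_zero, hSsum] at h2
    have := hmax j₀; omega
  have hsppos : (0:ℝ) < Real.sqrt (2 * Real.pi) :=
    Real.sqrt_pos.mpr (by positivity)
  have h2pi1 : (1:ℝ) ≤ Real.sqrt (2 * Real.pi) := by
    rw [show (1:ℝ) = Real.sqrt 1 by simp]
    exact Real.sqrt_le_sqrt (by nlinarith [Real.pi_gt_three])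
  -- the key product lower bound
  have hkey : Real.sqrt (2 * Real.pi) * stf n ≤ ∏ j ∈ S, stf (t j) := by
    rw [← Finset.mul_prod_erase S _ hj₀]
    have h1 : stf n ≤ stf (t j₀) := stf_anti (hmem _ hj₀) (hle _ hj₀)
    have h2 : Real.sqrt (2 * Real.pi) ≤ ∏ j ∈ S.erase j₀, stf (t j) := by
      obtain ⟨j₁, hj₁⟩ := herase
      rw [← Finset.mul_prod_erase _ _ hj₁]
      have hone : (1:ℝ) ≤ ∏ j ∈ (S.erase j₀).erase j₁, stf (t j) := by
        calc (1:ℝ) = ∏ _j ∈ (S.erase j₀).erase j₁, (1:ℝ) := by simp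
          _ ≤ _ := Finset.prod_le_prod (by simp) (fun j hj => le_trans h2pi1
              (stf_ge _ (hmem _ (Finset.mem_of_mem_erase (Finset.mem_of_mem_erase hj)))))
      calc Real.sqrt (2 * Real.pi) = Real.sqrt (2 * Real.pi) * 1 := (mul_one _).symm
        _ ≤ stf (t j₁) * ∏ j ∈ (S.erase j₀).erase j₁, stf (t j) :=
            mul_le_mul (stf_ge _ (hmem _ (Finset.mem_of_mem_erase hj₁))) hone zero_le_one
              (stf_pos _ (hmem _ (Finset.mem_of_mem_erase hj₁))).le
    calc Real.sqrt (2 * Real.pi) * stf n = stf n * Real.sqrt (2 * Real.pi) := mul_comm _ _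
      _ ≤ stf (t j₀) * ∏ j ∈ S.erase j₀, stf (t j) :=
        mul_le_mul h1 h2 (Real.sqrt_nonneg _) (stf_pos _ (hmem _ hj₀)).le
  -- the identity
  have hid : ((n ! : ℝ) / n ^ n) * ∏ j ∈ S, ((t j : ℝ) ^ t j / (t j)!)
      = stf n * Real.sqrt n *
        ((∏ j ∈ S, (1 / stf (t j))) * ∏ j ∈ S, (1 / Real.sqrt (t j))) := by
    have e1 : ∀ j ∈ S, ((t j : ℝ) ^ t j / (t j)!)
        = Real.exp 1 ^ (t j) * ((1 / stf (t j)) * (1 / Real.sqrt (t j))) := by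
      intro j hj
      have h1 : (0:ℝ) < t j := by exact_mod_cast hmem j hj
      have h2 : (0:ℝ) < (t j)! := by exact_mod_cast Nat.factorial_pos _
      have h3 : 0 < Real.sqrt (t j) := Real.sqrt_pos.mpr h1
      rw [stf]
      have h5 : (0:ℝ) < Real.exp 1 := Real.exp_pos 1
      field_simp
      ring
      rw [mul_assoc, ← mul_pow, mul_inv_cancel₀ h5.ne', one_pow, mul_one]
    rw [Finset.prod_congr rfl e1, Finset.prod_mul_distrib, Finset.prod_pow_eq_pow_sum, hSsum,
      factorial_eq_stf n hn, Finset.prod_mul_distrib]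
    have h9 : ((n:ℝ) ^ n / Real.exp 1 ^ n) / (n:ℝ) ^ n * Real.exp 1 ^ n = 1 := by
      have hne : Real.exp 1 ^ n ≠ 0 := by positivity
      have hnn : ((n:ℝ)) ^ n ≠ 0 := by positivity
      field_simp
    rw [div_pow]
    linear_combination (stf n * Real.sqrt n *
      ((∏ j ∈ S, (1 / stf (t j))) * ∏ j ∈ S, (1 / Real.sqrt (t j)))) * h9
  have hprodS : 0 < ∏ j ∈ S, stf (t j) := Finset.prod_pos fun j hj => stf_pos _ (hmem j hj)
  have hPf : ∏ j ∈ S, (1 / stf (t j)) = (∏ j ∈ S, stf (t j))⁻¹ := by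
    rw [← Finset.prod_inv_distrib]
    simp [one_div]
  have hP2 : (0:ℝ) ≤ ∏ j ∈ S, (1 / Real.sqrt (t j)) :=
    Finset.prod_nonneg fun j _ => by positivity
  constructor
  · rw [hid]
    have hmain : stf n * (∏ j ∈ S, (1 / stf (t j))) ≤ 1 / Real.sqrt (2 * Real.pi) := by
      rw [hPf, ← div_eq_mul_inv, div_le_div_iff₀ hprodS hsppos, one_mul]
      linarith [hkey]
    calc stf n * Real.sqrt n *
          ((∏ j ∈ S, (1 / stf (t j))) * ∏ j ∈ S, (1 / Real.sqrt (t j)))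
        = (stf n * (∏ j ∈ S, (1 / stf (t j)))) *
            (Real.sqrt n * ∏ j ∈ S, (1 / Real.sqrt (t j))) := by ring
      _ ≤ (1 / Real.sqrt (2 * Real.pi)) *
            (Real.sqrt n * ∏ j ∈ S, (1 / Real.sqrt (t j))) := by
          apply mul_le_mul_of_nonneg_right hmain
          exact mul_nonneg (Real.sqrt_nonneg _) hP2
      _ = Real.sqrt n / Real.sqrt (2 * Real.pi) * ∏ j ∈ S, (1 / Real.sqrt (t j)) := by
          ring
  · have hP2le : ∏ j ∈ S, (1 / Real.sqrt (t j)) ≤ 1 := by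
      apply Finset.prod_le_one (fun j _ => by positivity)
      intro j hj
      have h1 : (1:ℝ) ≤ Real.sqrt (t j) := by
        rw [show (1:ℝ) = Real.sqrt 1 by simp]
        exact Real.sqrt_le_sqrt (by exact_mod_cast hmem j hj)
      rw [div_le_one (by linarith)]
      linarith
    have hlt : (1:ℝ) < Real.sqrt (2 * Real.pi) := by
      rw [show (1:ℝ) = Real.sqrt 1 by simp]
      exact Real.sqrt_lt_sqrt (by norm_num) (by nlinarith [Real.pi_gt_three])
    have hsn : 0 < Real.sqrt n := Real.sqrt_pos.mpr hn'
    calc Real.sqrt n / Real.sqrt (2 * Real.pi) * ∏ j ∈ S, (1 / Real.sqrt (t j))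
        ≤ Real.sqrt n / Real.sqrt (2 * Real.pi) * 1 :=
          mul_le_mul_of_nonneg_left hP2le (by positivity)
      _ = Real.sqrt n / Real.sqrt (2 * Real.pi) := mul_one _
      _ < Real.sqrt n := by
          rw [div_lt_iff₀ hsppos]
          nlinarith
end

section
/- Let r = (r_1,...,r_{k+1}) be a probability vector with all r_i > 0, and for positive integer n define c_{n,i}(r) = ⌊n r_i + 1/2⌋ / n. Then Σ_{i=1}^{k+1} c_{n,i}(r) log(r_i / c_{n,i}(r)) ≥ −(k+1)/(2n) − (1/(4n^2)) Σ_{i=1}^{k+1} 1/r_i, for all n large enough that ⌊n r_i + 1/2⌋ ≥ 1 for every i. -/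
open Finset

lemma pointwise_bound (ρ c N : ℝ) (hρ : 0 < ρ) (hc : 0 < c) (hN : 0 < N)
    (h1 : c - ρ ≤ 1 / (2 * N)) (h2 : ρ - c ≤ 1 / (2 * N)) :
    c * Real.log (ρ / c) ≥ -(1 / (2 * N)) - 1 / (4 * N ^ 2) * (1 / ρ) := by
  have hlog : Real.log (c / ρ) ≤ c / ρ - 1 :=
    Real.log_le_sub_one_of_pos (div_pos hc hρ)
  have hrw : Real.log (ρ / c) = -Real.log (c / ρ) := by
    rw [← Real.log_inv, inv_div]
  have key : c * Real.log (ρ / c) ≥ c - c ^ 2 / ρ := by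
    rw [hrw]
    have : -Real.log (c / ρ) ≥ 1 - c / ρ := by linarith
    have h := mul_le_mul_of_nonneg_left (neg_le_neg hlog) hc.le
    calc c * -Real.log (c / ρ) ≥ c * (1 - c / ρ) := by nlinarith
      _ = c - c ^ 2 / ρ := by field_simp
  have hsq : (c - ρ) ^ 2 ≤ 1 / (4 * N ^ 2) := by
    have h := sq_le_sq' (by linarith : -(1 / (2 * N)) ≤ c - ρ) h1
    calc (c - ρ) ^ 2 ≤ (1 / (2 * N)) ^ 2 := h
      _ = 1 / (4 * N ^ 2) := by field_simp; ring
  have expand : c - c ^ 2 / ρ - (-(1 / (2 * N)) - 1 / (4 * N ^ 2) * (1 / ρ))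
      = (1 / (2 * N) - (c - ρ)) + (1 / (4 * N ^ 2) - (c - ρ) ^ 2) / ρ := by
    field_simp
    ring
  have hnn : (0:ℝ) ≤ (1 / (4 * N ^ 2) - (c - ρ) ^ 2) / ρ :=
    div_nonneg (by linarith) hρ.le
  linarith

/-- For a positive probability vector `r` and `c_{n,i} = ⌊n r i + 1/2⌋ / n`, as soon as
`n` is large enough that every `⌊n r i + 1/2⌋ ≥ 1`,
`∑ i, c_{n,i} log (r i / c_{n,i}) ≥ -(k+1)/(2n) - (1/(4n²)) ∑ i, 1/r i`. -/
theorem stmt_10 (k : ℕ) (r : Fin (k + 1) → ℝ)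
    (hr : ∀ i, 0 < r i) (hsum : ∑ i, r i = 1)
    (n : ℕ) (hn : 0 < n) (hfloor : ∀ i, 1 ≤ ⌊(n : ℝ) * r i + 1 / 2⌋) :
    ∑ i, ((⌊(n : ℝ) * r i + 1 / 2⌋ : ℝ) / n) *
        Real.log (r i / ((⌊(n : ℝ) * r i + 1 / 2⌋ : ℝ) / n)) ≥
      -((k + 1 : ℝ) / (2 * n)) - (1 / (4 * (n : ℝ) ^ 2)) * ∑ i, 1 / r i := by
  have hN : (0 : ℝ) < n := Nat.cast_pos.mpr hn
  have hsum' : ∑ i : Fin (k+1), (-(1 / (2 * (n:ℝ))) - 1 / (4 * (n:ℝ) ^ 2) * (1 / r i))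
      = -((k + 1 : ℝ) / (2 * n)) - (1 / (4 * (n : ℝ) ^ 2)) * ∑ i, 1 / r i := by
    rw [Finset.sum_sub_distrib, Finset.sum_const, ← Finset.mul_sum]
    simp [Finset.card_univ]
    ring
  rw [ge_iff_le, ← hsum']
  apply Finset.sum_le_sum
  intro i _
  set c : ℝ := (⌊(n : ℝ) * r i + 1 / 2⌋ : ℝ) / n with hcdef
  have hc : 0 < c := by
    apply div_pos _ hN
    exact_mod_cast lt_of_lt_of_le Int.zero_lt_one (hfloor i)
  have hfl : (⌊(n : ℝ) * r i + 1 / 2⌋ : ℝ) ≤ (n : ℝ) * r i + 1 / 2 := Int.floor_le _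
  have hfl2 : (n : ℝ) * r i + 1 / 2 - 1 < (⌊(n : ℝ) * r i + 1 / 2⌋ : ℝ) :=
    Int.sub_one_lt_floor _
  have h1 : c - r i ≤ 1 / (2 * n) := by
    rw [hcdef, div_sub' hN.ne', div_le_div_iff₀ hN (by positivity)]
    nlinarith
  have h2 : r i - c ≤ 1 / (2 * n) := by
    rw [hcdef, sub_div' hN.ne', div_le_div_iff₀ hN (by positivity)]
    nlinarith
  exact pointwise_bound (r i) c n (hr i) hc hN h1 h2
end

section
/- Let r be a probability vector in R^{k+1} with all r_i > 0, s > 0, and define the rounded vector c_n(r) with c_{n,i}(r) = ⌊n r_i + 1/2⌋/n and the KL-neighborhood G_{n,s}(r) = {θ in the open simplex : KL(c_n(r) || θ) < (k+1+s) log(n) / n}. Then for every ε > 0 there exists N such that for all n > N, r ∈ G_{n,s}(r) and G_{n,s}(r) ⊆ B_ε(r) (the Euclidean ball of radius ε around r). -/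
open Finset
open Filter

lemma aux_log_le (t : ℝ) (ht : 1 ≤ t) : Real.log t ≤ (t - t⁻¹)/2 := by
  have hmono : MonotoneOn (fun y : ℝ => (y - y⁻¹)/2 - Real.log y) (Set.Ici 1) := by
    have hder : ∀ x : ℝ, 0 < x →
        HasDerivAt (fun y : ℝ => (y - y⁻¹)/2 - Real.log y) ((x-1)^2/(2*x^2)) x := by
      intro x hx
      have h1 : HasDerivAt (fun y : ℝ => y⁻¹) (-(x^2)⁻¹) x := hasDerivAt_inv hx.ne'
      have h2 : HasDerivAt (fun y : ℝ => (y - y⁻¹)/2) ((1 - -(x^2)⁻¹)/2) x :=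
        ((hasDerivAt_id x).sub h1).div_const 2
      have h3 : HasDerivAt Real.log x⁻¹ x := Real.hasDerivAt_log hx.ne'
      refine (h2.fun_sub h3).congr_deriv ?_
      field_simp
      ring
    apply monotoneOn_of_deriv_nonneg (convex_Ici 1)
    · apply ContinuousOn.sub
      · exact (ContinuousOn.sub continuousOn_id (ContinuousOn.inv₀ continuousOn_id
          (fun x hx => by simp at hx; positivity))).div_const 2
      · exact Real.continuousOn_log.mono (by intro x hx; simp at hx ⊢; linarith)
    · intro x hx
      rw [interior_Ici] at hx
      exact ((hder x (by simp at hx; linarith)).differentiableAt).differentiableWithinAt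
    · intro x hx
      rw [interior_Ici] at hx
      simp only [Set.mem_Ioi] at hx
      rw [(hder x (by linarith)).deriv]
      positivity
  have := hmono (Set.self_mem_Ici) (Set.mem_Ici.mpr ht) ht
  simp at this
  linarith

lemma aux_quad_le (t : ℝ) (h0 : 0 < t) (h1 : t ≤ 1) : (t-1)^2/2 ≤ t - 1 - Real.log t := by
  have hanti : AntitoneOn (fun y : ℝ => y - 1 - (y-1)^2/2 - Real.log y) (Set.Ioc 0 1) := by
    have hder : ∀ x : ℝ, 0 < x →
        HasDerivAt (fun y : ℝ => y - 1 - (y-1)^2/2 - Real.log y) (-((x-1)^2/x)) x := by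
      intro x hx
      have h1 : HasDerivAt (fun y : ℝ => y - 1 - (y-1)^2/2) (1 - (2*(x-1)*1)/2) x := by
        have := ((hasDerivAt_id x).sub_const 1)
        have hsq : HasDerivAt (fun y : ℝ => (y-1)^2) (2*(x-1)*1) x := by
          simpa using (((hasDerivAt_id x).sub_const 1).fun_pow 2)
        simpa using (((hasDerivAt_id x).sub_const 1).fun_sub (hsq.div_const 2))
      have h3 : HasDerivAt Real.log x⁻¹ x := Real.hasDerivAt_log hx.ne'
      refine (h1.fun_sub h3).congr_deriv ?_
      field_simp
      ring
    apply antitoneOn_of_deriv_nonpos (convex_Ioc 0 1)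
    · apply ContinuousOn.sub (by fun_prop)
      · exact Real.continuousOn_log.mono (by intro x hx; simp at hx ⊢; linarith [hx.1])
    · intro x hx
      rw [interior_Ioc] at hx
      exact ((hder x hx.1).differentiableAt).differentiableWithinAt
    · intro x hx
      rw [interior_Ioc] at hx
      rw [(hder x hx.1).deriv]
      have : 0 ≤ (x-1)^2/x := div_nonneg (sq_nonneg _) hx.1.le
      linarith
  have := hanti (Set.mem_Ioc.mpr ⟨h0, h1⟩) (Set.mem_Ioc.mpr ⟨one_pos, le_refl 1⟩) h1
  simp at this
  linarith

lemma aux_quad_ge (t : ℝ) (ht : 1 ≤ t) : (t-1)^2/(2*t) ≤ t - 1 - Real.log t := by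
  have h := aux_log_le t ht
  have ht0 : 0 < t := by linarith
  have heq : t - 1 - (t-t⁻¹)/2 = (t-1)^2/(2*t) := by field_simp; ring
  linarith

lemma aux_f_bound (x y : ℝ) (hx : 0 < x) (hx2 : x ≤ 2) (hy : 0 < y) (hy1 : y ≤ 1) :
    (y - x)^2/4 ≤ x * Real.log (x/y) - x + y := by
  set t := y / x with hts
  have ht0 : 0 < t := by positivity
  have hyx : y = x * t := by rw [hts]; field_simp
  have hlog : Real.log (x/y) = - Real.log t := by
    rw [hts, ← Real.log_inv]
    congr 1
    field_simp
  rw [hlog]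
  rcases le_total t 1 with ht1 | ht1
  · have h := aux_quad_le t ht0 ht1
    have h2 := mul_le_mul_of_nonneg_left h hx.le
    have e : x * ((t-1)^2/2) = (y-x)^2/(2*x) := by rw [hyx]; field_simp
    have e2 : (y-x)^2/4 ≤ (y-x)^2/(2*x) := by
      apply div_le_div_of_nonneg_left (sq_nonneg _) (by positivity)
      linarith
    rw [e] at h2
    nlinarith [h2]
  · have h := aux_quad_ge t ht1
    have h2 := mul_le_mul_of_nonneg_left h hx.le
    have e : x * ((t-1)^2/(2*t)) = (y-x)^2/(2*y) := by
      rw [hyx]; field_simp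
    have e2 : (y-x)^2/4 ≤ (y-x)^2/(2*y) := by
      apply div_le_div_of_nonneg_left (sq_nonneg _) (by positivity)
      linarith
    rw [e] at h2
    nlinarith [h2]

lemma part2_bound (k : ℕ) (c θ : Fin (k+1) → ℝ)
    (hc_pos : ∀ i, 0 < c i) (hc2 : ∀ i, c i ≤ 2)
    (hθpos : ∀ i, 0 < θ i) (hθ1 : ∀ i, θ i ≤ 1) (hθsum : ∑ i, θ i = 1)
    (i : Fin (k+1)) :
    (θ i - c i)^2/4 ≤ (∑ j, c j * Real.log (c j / θ j)) + (1 - ∑ j, c j) := by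
  have hfb := aux_f_bound (c i) (θ i) (hc_pos i) (hc2 i) (hθpos i) (hθ1 i)
  have hrest : ∀ j, c j - θ j ≤ c j * Real.log (c j / θ j) := by
    intro j
    have hpos : 0 < θ j / c j := div_pos (hθpos j) (hc_pos j)
    have hlog := Real.log_le_sub_one_of_pos hpos
    have hneg : Real.log (c j / θ j) = - Real.log (θ j / c j) := by
      rw [← Real.log_inv]; congr 1; rw [inv_div]
    have hm := mul_le_mul_of_nonneg_left hlog (hc_pos j).le
    have he : c j * (θ j / c j - 1) = θ j - c j := by
      rw [mul_sub, mul_one, mul_div_cancel₀ _ (hc_pos j).ne']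
    rw [hneg]
    nlinarith [hm, he]
  have hsplit : (c i * Real.log (c i / θ i)) + ∑ j ∈ univ.erase i, (c j - θ j)
      ≤ ∑ j, c j * Real.log (c j / θ j) := by
    rw [← Finset.add_sum_erase _ (fun j => c j * Real.log (c j / θ j)) (Finset.mem_univ i)]
    exact add_le_add_right (Finset.sum_le_sum fun j _ => hrest j) _
  have herase : ∑ j ∈ univ.erase i, (c j - θ j) = (∑ j, c j) - 1 - (c i - θ i) := by
    have h : (c i - θ i) + ∑ j ∈ univ.erase i, (c j - θ j) = ∑ j, (c j - θ j) :=
      Finset.add_sum_erase _ (fun j => c j - θ j) (Finset.mem_univ i)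
    have h2 : ∑ j, (c j - θ j) = (∑ j, c j) - 1 := by
      rw [Finset.sum_sub_distrib, hθsum]
    rw [h2] at h
    linarith [h]
  rw [herase] at hsplit
  linarith [hfb, hsplit]

lemma part1_term (x ri nn : ℝ) (hx : 0 < x) (hx2 : x ≤ 2) (hri : 0 < ri) (hn : 0 < nn)
    (hub : x - ri ≤ 1/(2*nn)) :
    x * Real.log (x / ri) ≤ 1 / (nn * ri) := by
  have hcr : 0 < x / ri := div_pos hx hri
  have hlog := Real.log_le_sub_one_of_pos hcr
  have step1 : x * Real.log (x / ri) ≤ x * (x / ri - 1) :=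
    mul_le_mul_of_nonneg_left hlog hx.le
  have hkey : x * (x - ri) ≤ 1/nn := by
    have h2n : 2 * (1/(2*nn)) = 1/nn := by field_simp
    rcases le_total x ri with hle | hle
    · have : x * (x - ri) ≤ 0 := mul_nonpos_of_nonneg_of_nonpos hx.le (by linarith)
      have : (0:ℝ) < 1/nn := by positivity
      linarith
    · nlinarith [hub, h2n]
  calc x * Real.log (x / ri) ≤ x * (x / ri - 1) := step1
    _ = (x * (x - ri)) / ri := by field_simp
    _ ≤ (1/nn) / ri := by gcongr
    _ = 1 / (nn * ri) := by rw [div_div]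

set_option maxHeartbeats 1000000 in
lemma per_n (k : ℕ) (r : Fin (k + 1) → ℝ)
    (hr : ∀ i, 0 < r i) (hsum : ∑ i, r i = 1) (s : ℝ) (ε : ℝ) (hε : ε > 0)
    (i₀ : Fin (k+1)) (hδle : ∀ i, r i₀ ≤ r i) (hr1 : ∀ i, r i ≤ 1)
    (n : ℕ)
    (h1 : (∑ i, 1 / r i) < ((k:ℝ) + 1 + s) * Real.log n)
    (h2 : (1:ℝ) / n < r i₀)
    (h3 : ((k:ℝ) + 1) * (8 * (((k:ℝ)+1+s) * (Real.log n / n) + ((k:ℝ)+1)/2 * (1/n))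
        + (1/2) * (1/n)^2) < ε ^ 2)
    (h4 : 1 ≤ n) :
      (∑ i, ((⌊(n : ℝ) * r i + 1 / 2⌋ : ℝ) / n) *
          Real.log (((⌊(n : ℝ) * r i + 1 / 2⌋ : ℝ) / n) / r i) <
        ((k : ℝ) + 1 + s) * Real.log n / n) ∧
      ∀ θ : Fin (k + 1) → ℝ, (∀ i, 0 < θ i) → ∑ i, θ i = 1 →
        (∑ i, ((⌊(n : ℝ) * r i + 1 / 2⌋ : ℝ) / n) *
            Real.log (((⌊(n : ℝ) * r i + 1 / 2⌋ : ℝ) / n) / θ i) <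
          ((k : ℝ) + 1 + s) * Real.log n / n) →
        Real.sqrt (∑ i, (θ i - r i) ^ 2) < ε := by
  have hn0 : (0:ℝ) < n := by exact_mod_cast Nat.pos_of_ne_zero (by omega)
  have hn1 : (1:ℝ) ≤ n := by exact_mod_cast h4
  obtain ⟨c, hceq⟩ : ∃ c : Fin (k+1) → ℝ, ∀ i, c i = (⌊(n : ℝ) * r i + 1 / 2⌋ : ℝ) / n :=
    ⟨_, fun i => rfl⟩
  have hc_up : ∀ i, c i ≤ r i + 1 / (2*(n:ℝ)) := by
    intro i
    have hfl := Int.floor_le ((n : ℝ) * r i + 1 / 2)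
    rw [hceq i, div_le_iff₀ hn0]
    have he : (r i + 1/(2*(n:ℝ))) * n = (n:ℝ) * r i + 1/2 := by field_simp
    rw [he]
    exact hfl
  have hc_low : ∀ i, r i - 1 / (2*(n:ℝ)) ≤ c i := by
    intro i
    have hfl := Int.sub_one_lt_floor ((n : ℝ) * r i + 1 / 2)
    rw [hceq i, le_div_iff₀ hn0]
    have he : (r i - 1/(2*(n:ℝ))) * n = (n:ℝ) * r i - 1/2 := by field_simp
    rw [he]
    linarith [hfl]
  have h2n : 1 / (2*(n:ℝ)) < r i₀ / 2 := by
    rw [div_lt_iff₀ hn0] at h2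
    rw [div_lt_div_iff₀ (by positivity) (by norm_num)]
    nlinarith [h2]
  have hc_pos : ∀ i, 0 < c i := by
    intro i
    have h5 := hc_low i
    have h6 := hδle i
    linarith [hr i₀]
  have hn2 : 1/(2*(n:ℝ)) ≤ 1 := by
    rw [div_le_one (by positivity)]
    linarith
  have hc_le2 : ∀ i, c i ≤ 2 := by
    intro i
    linarith [hc_up i, hr1 i]
  constructor
  · -- Part 1
    have hg1 : (∑ i, ((⌊(n : ℝ) * r i + 1 / 2⌋ : ℝ) / n) *
        Real.log (((⌊(n : ℝ) * r i + 1 / 2⌋ : ℝ) / n) / r i))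
        = ∑ i, c i * Real.log (c i / r i) :=
      Finset.sum_congr rfl fun i _ => by rw [hceq i]
    rw [hg1]
    have hcalc : ∑ i, c i * Real.log (c i / r i) < ((k:ℝ) + 1 + s) * Real.log n / n := by
      calc ∑ i, c i * Real.log (c i / r i) ≤ ∑ i, 1 / ((n:ℝ) * r i) :=
            Finset.sum_le_sum (fun i _ =>
              part1_term (c i) (r i) n (hc_pos i) (hc_le2 i) (hr i) hn0
                (by linarith [hc_up i]))
        _ = (∑ i, 1 / r i) / n := by
            rw [Finset.sum_div]
            exact Finset.sum_congr rfl fun i _ => by rw [div_div, mul_comm]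
        _ < ((k:ℝ) + 1 + s) * Real.log n / n := by
            rw [div_lt_div_iff₀ hn0 hn0]
            exact mul_lt_mul_of_pos_right h1 hn0
    exact hcalc
  · -- Part 2
    intro θ hθpos hθsum Hθ
    have hθ1 : ∀ i, θ i ≤ 1 := by
      intro i
      rw [← hθsum]
      exact Finset.single_le_sum (f := θ) (fun j _ => (hθpos j).le) (Finset.mem_univ i)
    have HθC : ∑ j, c j * Real.log (c j / θ j) < ((k:ℝ) + 1 + s) * Real.log n / n := by
      have hg2 : (∑ j, c j * Real.log (c j / θ j))
          = ∑ j, ((⌊(n : ℝ) * r j + 1 / 2⌋ : ℝ) / n) *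
            Real.log (((⌊(n : ℝ) * r j + 1 / 2⌋ : ℝ) / n) / θ j) :=
        Finset.sum_congr rfl fun j _ => by rw [hceq j]
      rw [hg2]
      exact Hθ
    have hS : 1 - ((k:ℝ)+1) * (1/(2*(n:ℝ))) ≤ ∑ j, c j := by
      have he : (1:ℝ) - ((k:ℝ)+1) * (1/(2*(n:ℝ))) = ∑ i : Fin (k+1), (r i - 1/(2*(n:ℝ))) := by
        rw [Finset.sum_sub_distrib, hsum, Finset.sum_const, Finset.card_univ,
          Fintype.card_fin]
        push_cast
        ring
      rw [he]
      exact Finset.sum_le_sum fun i _ => hc_low i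
    have hcoord : ∀ i : Fin (k+1), (θ i - c i)^2
        ≤ 4 * (((k:ℝ) + 1 + s) * Real.log n / n + ((k:ℝ)+1) * (1/(2*(n:ℝ)))) := by
      intro i
      have hb := part2_bound k c θ hc_pos hc_le2 hθpos hθ1 hθsum i
      linarith [hb, HθC, hS]
    have hterm : ∀ i : Fin (k+1), (θ i - r i)^2
        ≤ 8 * (((k:ℝ)+1+s) * (Real.log n / n) + ((k:ℝ)+1)/2 * (1/(n:ℝ))) + (1/2) * (1/(n:ℝ))^2 := by
      intro i
      have h5 := hcoord i
      have hub : c i - r i ≤ 1/(2*(n:ℝ)) := by linarith [hc_up i]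
      have hlb : -(1/(2*(n:ℝ))) ≤ c i - r i := by linarith [hc_low i]
      have hsq : (c i - r i)^2 ≤ (1/(2*(n:ℝ)))^2 := by
        nlinarith [mul_nonneg (by linarith : (0:ℝ) ≤ 1/(2*(n:ℝ)) - (c i - r i))
          (by linarith : (0:ℝ) ≤ 1/(2*(n:ℝ)) + (c i - r i))]
      have he1 : (1/(2*(n:ℝ)))^2 = (1/4) * (1/(n:ℝ))^2 := by
        field_simp
        ring
      have he2 : ((k:ℝ)+1) * (1/(2*(n:ℝ))) = ((k:ℝ)+1)/2 * (1/(n:ℝ)) := by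
        field_simp
      have he3 : ((k:ℝ) + 1 + s) * Real.log n / n = ((k:ℝ)+1+s) * (Real.log n / n) := by
        ring
      have hkey : (θ i - r i)^2 ≤ 2*(θ i - c i)^2 + 2*(c i - r i)^2 := by
        nlinarith [sq_nonneg ((θ i - c i) - (c i - r i))]
      linarith [h5, hsq, he1, he2, he3, hkey]
    have hsum2 : ∑ i, (θ i - r i)^2 ≤ ((k:ℝ)+1) *
        (8 * (((k:ℝ)+1+s) * (Real.log n / n) + ((k:ℝ)+1)/2 * (1/(n:ℝ))) + (1/2) * (1/(n:ℝ))^2) := by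
      calc ∑ i, (θ i - r i)^2
          ≤ ∑ _i : Fin (k+1), (8 * (((k:ℝ)+1+s) * (Real.log n / n)
            + ((k:ℝ)+1)/2 * (1/(n:ℝ))) + (1/2) * (1/(n:ℝ))^2) :=
            Finset.sum_le_sum (fun i _ => hterm i)
        _ = ((k:ℝ)+1) * (8 * (((k:ℝ)+1+s) * (Real.log n / n)
            + ((k:ℝ)+1)/2 * (1/(n:ℝ))) + (1/2) * (1/(n:ℝ))^2) := by
            rw [Finset.sum_const, Finset.card_univ, Fintype.card_fin, nsmul_eq_mul]
            push_cast
            ring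
    rw [Real.sqrt_lt' hε]
    linarith [hsum2, h3]


/-- For a positive probability vector `r` and `s > 0`, with `c_n(r)` the rounded
empirical vector and `G_{n,s}(r)` the KL-neighbourhood
`{θ : KL(c_n(r) ‖ θ) < (k+1+s) log n / n}` of `c_n(r)` in the open simplex, for every
`ε > 0` eventually `r ∈ G_{n,s}(r)` and `G_{n,s}(r) ⊆ B_ε(r)`. -/
theorem stmt_11 (k : ℕ) (r : Fin (k + 1) → ℝ)
    (hr : ∀ i, 0 < r i) (hsum : ∑ i, r i = 1) (s : ℝ) (hs : 0 < s) :
    ∀ ε > 0, ∃ N : ℕ, ∀ n : ℕ, N < n →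
      (∑ i, ((⌊(n : ℝ) * r i + 1 / 2⌋ : ℝ) / n) *
          Real.log (((⌊(n : ℝ) * r i + 1 / 2⌋ : ℝ) / n) / r i) <
        ((k : ℝ) + 1 + s) * Real.log n / n) ∧
      ∀ θ : Fin (k + 1) → ℝ, (∀ i, 0 < θ i) → ∑ i, θ i = 1 →
        (∑ i, ((⌊(n : ℝ) * r i + 1 / 2⌋ : ℝ) / n) *
            Real.log (((⌊(n : ℝ) * r i + 1 / 2⌋ : ℝ) / n) / θ i) <
          ((k : ℝ) + 1 + s) * Real.log n / n) →
        Real.sqrt (∑ i, (θ i - r i) ^ 2) < ε := by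
  intro ε hε
  obtain ⟨i₀, -, hi₀⟩ := Finset.exists_min_image Finset.univ r ⟨0, Finset.mem_univ 0⟩
  have hδ : 0 < r i₀ := hr i₀
  have hδle : ∀ i, r i₀ ≤ r i := fun i => hi₀ i (Finset.mem_univ i)
  have hr1 : ∀ i, r i ≤ 1 := by
    intro i
    rw [← hsum]
    exact Finset.single_le_sum (f := r) (fun j _ => (hr j).le) (Finset.mem_univ i)
  have hks : (0:ℝ) < (k:ℝ) + 1 + s := by positivity
  have hlogn : Tendsto (fun n : ℕ => Real.log n) atTop atTop :=
    Real.tendsto_log_atTop.comp tendsto_natCast_atTop_atTop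
  have hlogdiv : Tendsto (fun n : ℕ => Real.log n / n) atTop (nhds 0) :=
    Real.isLittleO_log_id_atTop.tendsto_div_nhds_zero.comp tendsto_natCast_atTop_atTop
  have hinv : Tendsto (fun n : ℕ => (1:ℝ) / n) atTop (nhds 0) :=
    tendsto_one_div_atTop_nhds_zero_nat
  have E1 : ∀ᶠ n : ℕ in atTop, (∑ i, 1 / r i) < ((k:ℝ) + 1 + s) * Real.log n := by
    filter_upwards [hlogn.eventually_gt_atTop ((∑ i, 1 / r i) / ((k:ℝ)+1+s))] with n hn
    rw [div_lt_iff₀ hks] at hn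
    linarith [hn]
  have E2 : ∀ᶠ n : ℕ in atTop, (1:ℝ) / n < r i₀ := hinv.eventually_lt_const hδ
  have E3 : ∀ᶠ n : ℕ in atTop,
      ((k:ℝ) + 1) * (8 * (((k:ℝ)+1+s) * (Real.log n / n) + ((k:ℝ)+1)/2 * (1/n))
        + (1/2) * (1/n)^2) < ε ^ 2 := by
    have ht : Tendsto (fun n : ℕ => ((k:ℝ) + 1) * (8 * (((k:ℝ)+1+s) * (Real.log n / n)
        + ((k:ℝ)+1)/2 * (1/n)) + (1/2) * (1/n)^2)) atTop (nhds 0) := by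
      have h0 := ((((hlogdiv.const_mul (((k:ℝ)+1+s))).add
        ((hinv.const_mul (((k:ℝ)+1)/2)))).const_mul 8).add
        ((hinv.pow 2).const_mul (1/2))).const_mul ((k:ℝ)+1)
      simpa using h0
    exact ht.eventually_lt_const (by positivity)
  have E4 : ∀ᶠ n : ℕ in atTop, 1 ≤ n := eventually_ge_atTop 1
  have key : ∀ᶠ n : ℕ in atTop,
      (∑ i, ((⌊(n : ℝ) * r i + 1 / 2⌋ : ℝ) / n) *
          Real.log (((⌊(n : ℝ) * r i + 1 / 2⌋ : ℝ) / n) / r i) <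
        ((k : ℝ) + 1 + s) * Real.log n / n) ∧
      ∀ θ : Fin (k + 1) → ℝ, (∀ i, 0 < θ i) → ∑ i, θ i = 1 →
        (∑ i, ((⌊(n : ℝ) * r i + 1 / 2⌋ : ℝ) / n) *
            Real.log (((⌊(n : ℝ) * r i + 1 / 2⌋ : ℝ) / n) / θ i) <
          ((k : ℝ) + 1 + s) * Real.log n / n) →
        Real.sqrt (∑ i, (θ i - r i) ^ 2) < ε := by
    filter_upwards [E1, E2, E3, E4] with n h1 h2 h3 h4
    exact per_n k r hr hsum s ε hε i₀ hδle hr1 n h1 h2 h3 h4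
  rw [eventually_atTop] at key
  obtain ⟨N, hN⟩ := key
  exact ⟨N, fun n hn => hN n hn.le⟩
end

section
/- For the symmetric trine constraint set Θ = {(θ_1, θ_2) : θ_1 > 0, θ_2 > 0, θ_1 + θ_2 < 1, θ_1^2 + θ_2^2 + (1 − θ_1 − θ_2)^2 ≤ 1/2}, the area of Θ (i.e., its probability under the uniform distribution on the open simplex Θ_2 times the simplex area 1/2) satisfies: the uniform-prior probability of Θ equals π/(3√3) ≈ 0.6046. -/
open MeasureTheory

namespace Stmt18Aux

open Real

/-- The linear map whose preimage of the unit-style disk is the trine ellipse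
(centered at the origin). -/
noncomputable def Tmap : (ℝ × ℝ) →ₗ[ℝ] (ℝ × ℝ) where
  toFun q := (Real.sqrt 2 * q.1 + Real.sqrt (1/2) * q.2, Real.sqrt (3/2) * q.2)
  map_add' p q := by simp [Prod.ext_iff]; constructor <;> ring
  map_smul' c p := by
    simp [Prod.ext_iff, Prod.smul_fst, Prod.smul_snd, smul_eq_mul]
    constructor <;> ring

lemma det_Tmap : LinearMap.det Tmap = Real.sqrt 3 := by
  rw [← LinearMap.det_toMatrix (Module.Basis.finTwoProd ℝ), Matrix.det_fin_two]
  simp [LinearMap.toMatrix_apply, Tmap]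
  rw [mul_comm, div_mul_cancel₀]
  positivity

lemma Tmap_identity (x y : ℝ) :
    (√2*x + √(1/2)*y)^2 + (√(3/2)*y)^2 = 2*x^2+2*x*y+2*y^2 := by
  have h2 : (√2:ℝ)^2 = 2 := Real.sq_sqrt (by norm_num)
  have h12 : (√(1/2):ℝ)^2 = 1/2 := Real.sq_sqrt (by norm_num)
  have h32 : (√(3/2):ℝ)^2 = 3/2 := Real.sq_sqrt (by norm_num)
  have hmul : (√2:ℝ) * √(1/2) = 1 := by
    rw [← Real.sqrt_mul (by norm_num)]; norm_num
  linear_combination x^2*h2 + 2*x*y*hmul + y^2*h12 + y^2*h32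

lemma disk_vol : volume {q : ℝ × ℝ | q.1 ^ 2 + q.2 ^ 2 ≤ 1/6} = ENNReal.ofReal (π / 6) := by
  have h := Complex.volume_preserving_equiv_real_prod.measure_preimage
    (s := {q : ℝ × ℝ | q.1 ^ 2 + q.2 ^ 2 ≤ 1/6})
    ((measurableSet_le (by fun_prop) measurable_const).nullMeasurableSet)
  rw [← h]
  have hpre : Complex.measurableEquivRealProd ⁻¹' {q : ℝ × ℝ | q.1 ^ 2 + q.2 ^ 2 ≤ 1/6}
      = Metric.closedBall (0:ℂ) (Real.sqrt (1/6)) := by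
    ext z
    simp only [Set.mem_preimage, Set.mem_setOf_eq, Metric.mem_closedBall, dist_zero_right,
      Complex.measurableEquivRealProd_apply]
    have habs : ‖z‖ = √(z.re ^ 2 + z.im ^ 2) := by
      rw [Complex.norm_def, Complex.normSq_apply]; ring_nf
    rw [habs]
    exact (Real.sqrt_le_sqrt_iff (by positivity)).symm
  rw [hpre, Complex.volume_closedBall]
  rw [← ENNReal.ofReal_pow (by positivity), Real.sq_sqrt (by norm_num),
    ← NNReal.coe_real_pi, ENNReal.ofReal_coe_nnreal.symm, ← ENNReal.ofReal_mul (by norm_num)]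
  congr 1
  ring

/-- The volume of the trine ellipse (centered at `(1/3, 1/3)`). -/
lemma ellipse_vol :
    volume {p : ℝ × ℝ | 2*(p.1-1/3)^2 + 2*(p.1-1/3)*(p.2-1/3) + 2*(p.2-1/3)^2 ≤ 1/6}
      = ENNReal.ofReal (π / (6 * √3)) := by
  have hE : {p : ℝ × ℝ | 2*(p.1-1/3)^2 + 2*(p.1-1/3)*(p.2-1/3) + 2*(p.2-1/3)^2 ≤ 1/6}
      = (fun x => x + ((-(1/3) : ℝ), (-(1/3) : ℝ)))
          ⁻¹' (Tmap ⁻¹' {q : ℝ × ℝ | q.1 ^ 2 + q.2 ^ 2 ≤ 1/6}) := by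
    ext ⟨x, y⟩
    simp only [Set.mem_preimage, Set.mem_setOf_eq, Prod.mk_add_mk, Tmap, LinearMap.coe_mk,
      AddHom.coe_mk]
    rw [Tmap_identity]
    constructor <;> intro h <;> nlinarith [h]
  rw [hE, measure_preimage_add_right,
    Measure.addHaar_preimage_linearMap volume (by rw [det_Tmap]; positivity), det_Tmap,
    disk_vol, abs_of_nonneg (by positivity), ← ENNReal.ofReal_mul (by positivity)]
  congr 1
  rw [inv_mul_eq_div, div_div]

end Stmt18Aux

open Real Stmt18Aux

/-- The uniform-prior probability (under the uniform distribution on the open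
2-simplex) of the symmetric trine constraint set
`{θ : θ_1² + θ_2² + (1 - θ_1 - θ_2)² ≤ 1/2}` equals `π/(3√3) ≈ 0.6046`. -/
theorem stmt_18 :
    volume {p : ℝ × ℝ | 0 < p.1 ∧ 0 < p.2 ∧ p.1 + p.2 < 1 ∧
        p.1 ^ 2 + p.2 ^ 2 + (1 - p.1 - p.2) ^ 2 ≤ 1 / 2} /
      volume {p : ℝ × ℝ | 0 < p.1 ∧ 0 < p.2 ∧ p.1 + p.2 < 1} =
    ENNReal.ofReal (Real.pi / (3 * Real.sqrt 3)) := by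
  -- the triangle (open 2-simplex) volume is 1/2
  have htri : volume {p : ℝ × ℝ | 0 < p.1 ∧ 0 < p.2 ∧ p.1 + p.2 < 1}
      = ENNReal.ofReal (1/2) := by
    have hset : {p : ℝ × ℝ | 0 < p.1 ∧ 0 < p.2 ∧ p.1 + p.2 < 1}
        = regionBetween (fun _ => (0:ℝ)) (fun x => 1 - x) (Set.Ioo 0 1) := by
      ext ⟨x, y⟩
      simp only [regionBetween, Set.mem_setOf_eq, Set.mem_Ioo]
      constructor
      · rintro ⟨hx, hy, hxy⟩
        exact ⟨⟨hx, by linarith⟩, hy, by linarith⟩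
      · rintro ⟨⟨hx, hx1⟩, hy, hxy⟩
        exact ⟨hx, hy, by linarith⟩
    rw [hset, Measure.volume_eq_prod,
      volume_regionBetween_eq_integral (integrableOn_const (μ := volume) (s := Set.Ioo (0:ℝ) 1) measure_Ioo_lt_top.ne)
        ((intervalIntegrable_iff_integrableOn_Ioo_of_le zero_le_one).1
          (by apply IntervalIntegrable.sub <;>
            simp [intervalIntegrable_const, intervalIntegral.intervalIntegrable_id]))
        measurableSet_Ioo
        (fun x hx => by simp [Set.mem_Ioo] at hx; linarith [hx.2])]
    congr 1
    rw [← integral_Ioc_eq_integral_Ioo, ← intervalIntegral.integral_of_le zero_le_one]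
    simp only [Pi.sub_apply]
    have : ∀ x : ℝ, 1 - x - 0 = 1 - x := fun x => by ring
    simp_rw [this]
    rw [intervalIntegral.integral_sub intervalIntegrable_const
      intervalIntegral.intervalIntegrable_id]
    simp [integral_id]
    norm_num
  -- the constraint set volume is π / (6√3)
  have hco : volume {p : ℝ × ℝ | 0 < p.1 ∧ 0 < p.2 ∧ p.1 + p.2 < 1 ∧
      p.1 ^ 2 + p.2 ^ 2 + (1 - p.1 - p.2) ^ 2 ≤ 1 / 2}
      = ENNReal.ofReal (π / (6 * √3)) := by
    have hset : {p : ℝ × ℝ | 0 < p.1 ∧ 0 < p.2 ∧ p.1 + p.2 < 1 ∧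
        p.1 ^ 2 + p.2 ^ 2 + (1 - p.1 - p.2) ^ 2 ≤ 1 / 2}
        = {p : ℝ × ℝ | 2*(p.1-1/3)^2 + 2*(p.1-1/3)*(p.2-1/3) + 2*(p.2-1/3)^2 ≤ 1/6}
          \ {((1:ℝ)/2, (0:ℝ)), ((0:ℝ), (1:ℝ)/2), ((1:ℝ)/2, (1:ℝ)/2)} := by
      ext ⟨x, y⟩
      simp only [Set.mem_diff, Set.mem_setOf_eq, Set.mem_insert_iff, Set.mem_singleton_iff,
        Prod.mk.injEq, not_or, not_and]
      constructor
      · rintro ⟨hx, hy, hxy, hQ⟩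
        refine ⟨by nlinarith, ?_, ?_, ?_⟩
        · intro h1 h2; exact absurd h2 (by linarith)
        · intro h1 h2; exact absurd h1 (by linarith)
        · intro h1 h2; rw [h1, h2] at hxy; norm_num at hxy
      · rintro ⟨hE, h1, h2, h3⟩
        have hy0 : 0 ≤ y := by nlinarith [sq_nonneg (2*(x-1/3)+(y-1/3))]
        have hx0 : 0 ≤ x := by nlinarith [sq_nonneg (2*(y-1/3)+(x-1/3))]
        have hs1 : x + y ≤ 1 := by nlinarith [sq_nonneg ((x-1/3)-(y-1/3))]
        have hx' : 0 < x := by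
          rcases hx0.lt_or_eq with h | h
          · exact h
          · exfalso
            have : (y - 1/2)^2 ≤ 0 := by nlinarith
            have hy2 : y = 1/2 := by nlinarith [sq_nonneg (y - 1/2)]
            exact h2 h.symm hy2
        have hy' : 0 < y := by
          rcases hy0.lt_or_eq with h | h
          · exact h
          · exfalso
            have hx2 : x = 1/2 := by nlinarith [sq_nonneg (x - 1/2)]
            exact h1 hx2 h.symm
        have hs' : x + y < 1 := by
          rcases hs1.lt_or_eq with h | h
          · exact h
          · exfalso
            have hx2 : x = 1/2 := by nlinarith [sq_nonneg (x - 1/2)]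
            have hy2 : y = 1/2 := by linarith
            exact h3 hx2 hy2
        exact ⟨hx', hy', hs', by nlinarith⟩
    rw [hset, measure_diff_null, ellipse_vol]
    refine measure_union_null ?_ (measure_union_null (measure_singleton _) (measure_singleton _))
    exact measure_singleton _
  rw [htri, hco, ← ENNReal.ofReal_div_of_pos (by norm_num)]
  congr 1
  have h3 : (√3:ℝ) ≠ 0 := by positivity
  field_simp
  ring
end
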